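/- arXiv:1808.08596 — 2 statements merged into one kernel-verified Lean document; each statement's English description precedes it below -/
import Mathlib

section
/- (ZF + 𝒞_{ω₁} is a normal filter) If 𝒞_{ω₁} is an ultrafilter on ω₁, then for every sequence ⟨X_α : α ∈ ω₁ ∩ Lim⟩ with X_α ⊆ α for each α, there is a club C ⊆ ω₁ such that either C ∩ δ ⊆ X_δ for every δ ∈ C, or C ∩ X_δ = ∅ for every δ ∈ C. -/
noncomputable section
open Set

/-- The first uncountable ordinal. -/
def omega1 : Ordinal := (Cardinal.aleph 1).ord

/-- `δ` is a limit point of `D`. -/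
def IsLimitPoint (D : Set Ordinal) (δ : Ordinal) : Prop :=
  0 < δ ∧ ∀ β < δ, ∃ ξ ∈ D, β < ξ ∧ ξ < δ

/-- `D` is a club subset of `ω₁`. -/
def IsClubOmega1 (D : Set Ordinal) : Prop :=
  (∀ ξ ∈ D, ξ < omega1) ∧ (∀ β < omega1, ∃ ξ ∈ D, β < ξ) ∧
    (∀ δ < omega1, IsLimitPoint D δ → δ ∈ D)

/-- `X` measures `Y` (both of supremum `δ`). -/
def Measures (X Y : Set Ordinal) (δ : Ordinal) : Prop :=
  ∃ β < δ, ({ξ ∈ X | β ≤ ξ} ⊆ Y ∨ ∀ ξ ∈ X, β ≤ ξ → ξ ∉ Y)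

/-- `c` is a closed cofinal subset of the limit ordinal `α`. -/
def IsClosedCofinalIn (c : Set Ordinal) (α : Ordinal) : Prop :=
  (∀ ξ ∈ c, ξ < α) ∧ (∀ β < α, ∃ ξ ∈ c, β < ξ) ∧
    (∀ γ < α, IsLimitPoint c γ → γ ∈ c)

/-- A set of ordinals has order type `ω`. -/
def HasOrderTypeOmega (L : Set Ordinal) : Prop :=
  L.Infinite ∧ ∀ γ ∈ L, (L ∩ Set.Iio γ).Finite

/-- X belongs to the club filter on ω₁. -/
def InClubFilter (X : Set Ordinal) : Prop := ∃ C, IsClubOmega1 C ∧ C ⊆ X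

/-- S is a stationary subset of ω₁. -/
def IsStationaryOmega1 (S : Set Ordinal) : Prop := ∀ C, IsClubOmega1 C → (S ∩ C).Nonempty

/-- The diagonal intersection of an ω₁-sequence of sets. -/
def DiagInter (W : Ordinal → Set Ordinal) : Set Ordinal :=
  {δ | δ < omega1 ∧ ∀ α < δ, δ ∈ W α}

/-- The club filter is normal (closed under diagonal intersections). -/
def ClubFilterNormal : Prop :=
  ∀ W : Ordinal.{0} → Set Ordinal.{0}, (∀ α, α < omega1 → InClubFilter (W α)) →
    InClubFilter (DiagInter W)

/-- The club filter is an ultrafilter on ω₁. -/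
def ClubFilterUltra : Prop :=
  ∀ X : Set Ordinal.{0}, X ⊆ Set.Iio omega1 →
    InClubFilter X ∨ InClubFilter (Set.Iio omega1 \ X)

lemma one_lt_omega1' : (1 : Ordinal) < omega1 := by
  have h : Ordinal.omega0 ≤ omega1 := by
    rw [omega1, ← Cardinal.ord_aleph0]
    exact Cardinal.ord_le_ord.mpr (Cardinal.aleph0_le_aleph 1)
  exact lt_of_lt_of_le Ordinal.one_lt_omega0 h

lemma limitPoint_mono' {C C' : Set Ordinal} (h : C' ⊆ C) {γ : Ordinal}
    (hγ : IsLimitPoint C' γ) : IsLimitPoint C γ :=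
  ⟨hγ.1, fun β hβ => by obtain ⟨ξ, hξ, h1, h2⟩ := hγ.2 β hβ; exact ⟨ξ, h hξ, h1, h2⟩⟩

lemma inClubFilter_inter' (hN : ClubFilterNormal) {S T : Set Ordinal.{0}}
    (hS : InClubFilter S) (hT : InClubFilter T) : ∃ C, IsClubOmega1 C ∧ C ⊆ S ∩ T := by
  obtain ⟨C, hC, hCsub⟩ := hN (fun α => if α = 0 then S else T) (fun α _ => by
    by_cases h : α = 0 <;> simp [h, hS, hT])
  refine ⟨{ξ ∈ C | 1 < ξ}, ⟨?_, ?_, ?_⟩, ?_⟩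
  · exact fun ξ hξ => hC.1 ξ hξ.1
  · intro β hβ
    have hmax : max β 1 < omega1 := max_lt hβ one_lt_omega1'
    obtain ⟨ξ, hξC, hξ⟩ := hC.2.1 _ hmax
    exact ⟨ξ, ⟨hξC, lt_of_le_of_lt (le_max_right β 1) hξ⟩,
      lt_of_le_of_lt (le_max_left β 1) hξ⟩
  · intro γ hγ hlp
    have hγC := hC.2.2 γ hγ (limitPoint_mono' (fun ξ hξ => hξ.1) hlp)
    obtain ⟨ξ, hξ, _, hξγ⟩ := hlp.2 0 hlp.1
    exact ⟨hγC, lt_trans hξ.2 hξγ⟩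
  · rintro ξ ⟨hξC, hξ1⟩
    have hd := hCsub hξC
    have h0 := hd.2 0 (lt_trans zero_lt_one hξ1)
    have h1 := hd.2 1 hξ1
    simp only [if_pos rfl] at h0
    simp only [if_neg one_ne_zero] at h1
    exact ⟨h0, h1⟩

theorem uniform_measuring_zero (hN : ClubFilterNormal) (hU : ClubFilterUltra)
    (X : Ordinal.{0} → Set Ordinal.{0})
    (hsub : ∀ α, α < omega1 → Order.IsSuccLimit α → X α ⊆ Set.Iio α) :
    ∃ C : Set Ordinal.{0}, IsClubOmega1 C ∧
      ((∀ δ ∈ C, Order.IsSuccLimit δ → C ∩ Set.Iio δ ⊆ X δ) ∨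
       (∀ δ ∈ C, Order.IsSuccLimit δ → C ∩ X δ = ∅)) := by
  classical
  set Y : Ordinal → Set Ordinal := fun α => {δ | δ < omega1 ∧ α ∈ X δ} with hY
  set W : Ordinal → Set Ordinal := fun α =>
    if InClubFilter (Y α) then Y α else Set.Iio omega1 \ Y α with hW
  have hWmem : ∀ α, α < omega1 → InClubFilter (W α) := by
    intro α _
    by_cases h : InClubFilter (Y α)
    · simpa [hW, if_pos h]
    · rcases hU (Y α) (fun δ hδ => hδ.1) with h' | h'
      · exact absurd h' h
      · simpa [hW, if_neg h]
  obtain ⟨C₀, hC₀, hC₀sub⟩ := hN W hWmem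
  have key : ∀ δ ∈ C₀, ∀ α < δ, (α ∈ X δ ↔ InClubFilter (Y α)) := by
    intro δ hδ α hα
    have hd := hC₀sub hδ
    have hmem := hd.2 α hα
    by_cases h : InClubFilter (Y α)
    · rw [hW] at hmem
      simp only [if_pos h] at hmem
      exact ⟨fun _ => h, fun _ => hmem.2⟩
    · rw [hW] at hmem
      simp only [if_neg h] at hmem
      have : α ∉ X δ := fun hx => hmem.2 ⟨hd.1, hx⟩
      exact ⟨fun hx => absurd hx this, fun hc => absurd hc h⟩
  set A : Set Ordinal := {α | α < omega1 ∧ InClubFilter (Y α)} with hA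
  rcases hU A (fun α hα => hα.1) with ⟨D, hD, hDA⟩ | ⟨D, hD, hDA⟩
  · obtain ⟨C, hCclub, hCsub⟩ :=
      inClubFilter_inter' hN ⟨C₀, hC₀, subset_refl _⟩ ⟨D, hD, subset_refl _⟩
    refine ⟨C, hCclub, Or.inl ?_⟩
    rintro δ hδ _ ξ ⟨hξC, hξδ⟩
    have hξA : ξ ∈ A := hDA (hCsub hξC).2
    exact (key δ (hCsub hδ).1 ξ hξδ).mpr hξA.2
  · obtain ⟨C, hCclub, hCsub⟩ :=
      inClubFilter_inter' hN ⟨C₀, hC₀, subset_refl _⟩ ⟨D, hD, subset_refl _⟩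
    refine ⟨C, hCclub, Or.inr ?_⟩
    intro δ hδ hlim
    rw [Set.eq_empty_iff_forall_notMem]
    rintro ξ ⟨hξC, hξX⟩
    have hδω : δ < omega1 := hCclub.1 δ hδ
    have hξδ : ξ < δ := hsub δ hδω hlim hξX
    have hξD := hCsub hξC
    have hξnA : ξ ∉ A := (hDA hξD.2).2
    have hξω : ξ < omega1 := hCclub.1 ξ hξC
    have hnc : ¬ InClubFilter (Y ξ) := fun hc => hξnA ⟨hξω, hc⟩
    exact hnc ((key δ (hCsub hδ).1 ξ hξδ).mp hξX)

/-- (ZF + normality) If the club filter is an ultrafilter, then every sequence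
⟨X_α : α limit⟩ with X_α ⊆ α is uniformly measured by a single club. -/
theorem uniform_measuring_of_ultra (hN : ClubFilterNormal) (hU : ClubFilterUltra)
    (X : Ordinal → Set Ordinal)
    (hsub : ∀ α, α < omega1 → Order.IsSuccLimit α → X α ⊆ Set.Iio α) :
    ∃ C : Set Ordinal, IsClubOmega1 C ∧
      ((∀ δ ∈ C, Order.IsSuccLimit δ → C ∩ Set.Iio δ ⊆ X δ) ∨
       (∀ δ ∈ C, Order.IsSuccLimit δ → C ∩ X δ = ∅)) := by
  -- transfer to universe 0 via `Ordinal.lift`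
  have hom : Ordinal.lift.{u_1} omega1.{0} = omega1.{u_1} := by
    rw [omega1, omega1, Cardinal.lift_ord, Cardinal.lift_aleph, Ordinal.lift_one]
  set X₀ : Ordinal.{0} → Set Ordinal.{0} :=
    fun α => {β | Ordinal.lift.{u_1} β ∈ X (Ordinal.lift.{u_1} α)} with hX₀
  have hsub₀ : ∀ α, α < omega1 → Order.IsSuccLimit α → X₀ α ⊆ Set.Iio α := by
    intro α hα hlim β hβ
    have h1 : Ordinal.lift.{u_1} α < omega1.{u_1} := by
      rw [← hom]; exact (Ordinal.lift_lt).mpr hα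
    have h2 := hsub _ h1 (Ordinal.isSuccLimit_lift.mpr hlim) hβ
    exact (Ordinal.lift_lt).mp h2
  obtain ⟨C₀, hC₀, hcase⟩ := uniform_measuring_zero hN hU X₀ hsub₀
  set C : Set Ordinal.{u_1} := Ordinal.lift.{u_1} '' C₀ with hC
  have memC : ∀ ξ ∈ C, ∃ ξ₀ ∈ C₀, Ordinal.lift.{u_1} ξ₀ = ξ := by
    rintro ξ ⟨ξ₀, hξ₀, rfl⟩; exact ⟨ξ₀, hξ₀, rfl⟩
  have hclub : IsClubOmega1 C := by
    refine ⟨?_, ?_, ?_⟩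
    · rintro ξ ⟨ξ₀, hξ₀, rfl⟩
      rw [← hom]; exact (Ordinal.lift_lt).mpr (hC₀.1 ξ₀ hξ₀)
    · intro β hβ
      rw [← hom] at hβ
      obtain ⟨β₀, hlt, rfl⟩ := Ordinal.lt_lift_iff.mp hβ
      obtain ⟨ξ₀, hξ₀, hβξ⟩ := hC₀.2.1 β₀ hlt
      exact ⟨Ordinal.lift.{u_1} ξ₀, ⟨ξ₀, hξ₀, rfl⟩, (Ordinal.lift_lt).mpr hβξ⟩
    · intro δ hδ hlp
      rw [← hom] at hδ
      obtain ⟨δ₀, hlt, rfl⟩ := Ordinal.lt_lift_iff.mp hδ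
      have hlp₀ : IsLimitPoint C₀ δ₀ := by
        constructor
        · have := hlp.1
          rwa [← Ordinal.lift_zero.{0, u_1}, Ordinal.lift_lt] at this
        · intro β₀ hβ₀
          obtain ⟨ξ, hξC, h1, h2⟩ := hlp.2 (Ordinal.lift.{u_1} β₀)
            ((Ordinal.lift_lt).mpr hβ₀)
          obtain ⟨ξ₀, hξ₀, rfl⟩ := memC ξ hξC
          exact ⟨ξ₀, hξ₀, (Ordinal.lift_lt).mp h1, (Ordinal.lift_lt).mp h2⟩
      exact ⟨δ₀, hC₀.2.2 δ₀ hlt hlp₀, rfl⟩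
  refine ⟨C, hclub, ?_⟩
  rcases hcase with hcase | hcase
  · refine Or.inl ?_
    rintro δ hδ hlim ξ ⟨hξC, hξδ⟩
    obtain ⟨δ₀, hδ₀, rfl⟩ := memC δ hδ
    obtain ⟨ξ₀, hξ₀, rfl⟩ := memC ξ hξC
    exact hcase δ₀ hδ₀ (Ordinal.isSuccLimit_lift.mp hlim)
      ⟨hξ₀, (Ordinal.lift_lt).mp hξδ⟩
  · refine Or.inr ?_
    intro δ hδ hlim
    rw [Set.eq_empty_iff_forall_notMem]
    rintro ξ ⟨hξC, hξX⟩
    obtain ⟨δ₀, hδ₀, rfl⟩ := memC δ hδ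
    obtain ⟨ξ₀, hξ₀, rfl⟩ := memC ξ hξC
    have := hcase δ₀ hδ₀ (Ordinal.isSuccLimit_lift.mp hlim)
    rw [Set.eq_empty_iff_forall_notMem] at this
    exact this ξ₀ ⟨hξ₀, hξX⟩
end
end

section
/- In the setting of Proposition 3.1, if G is a filter on ℙ meeting E_C for every club C ⊆ ω₁ in M and meeting D_X = {(x,a) : X ∈ a} for every X ∈ 𝒴, then z = ⋃{x : ∃a (x,a) ∈ G} is an open M-stationary subset of δ such that z \ X is bounded in δ for every X ∈ 𝒴. -/
noncomputable section
open Set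

/-- z is M-stationary: it meets every club of ω₁ belonging to M
(here MSets is the collection of subsets of ω₁ that belong to M). -/
def MStat (MSets : Set (Set Ordinal)) (z : Set Ordinal) : Prop :=
  ∀ C ∈ MSets, IsClubOmega1 C → (z ∩ C).Nonempty

/-- A set of ordinals is open in the order topology. -/
def IsOpenSub (x : Set Ordinal) : Prop :=
  ∀ ξ ∈ x, ξ = 0 ∨ ∃ β < ξ, Set.Ioc β ξ ⊆ x

/-- A condition of the poset ℙ of Proposition 3.1: a pair (x, a) where x ∈ M is
an open bounded subset of δ = M ∩ ω₁ and a is a finite subset of 𝒴. -/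
structure Cond (MSets 𝒴 : Set (Set Ordinal)) (δ : Ordinal) where
  x : Set Ordinal
  a : Set (Set Ordinal)
  x_mem : x ∈ MSets
  x_open : IsOpenSub x
  x_sub : ∀ ξ ∈ x, ξ < δ
  x_bdd : ∃ β < δ, ∀ ξ ∈ x, ξ < β
  a_fin : a.Finite
  a_sub : a ⊆ 𝒴

/-- The order on ℙ: (y, b) ≤ (x, a) iff y end-extends x, a ⊆ b, and y \ x ⊆ ⋂ a. -/
def Cond.le {MSets 𝒴 : Set (Set Ordinal)} {δ : Ordinal}
    (q p : Cond MSets 𝒴 δ) : Prop :=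
  p.x ⊆ q.x ∧ (∀ ξ ∈ q.x, ξ ∉ p.x → ∀ η ∈ p.x, η < ξ) ∧
    p.a ⊆ q.a ∧ (q.x \ p.x ⊆ ⋂₀ p.a)

/-- If G is a filter on ℙ meeting each E_C (C a club in M) and each D_X (X ∈ 𝒴),
then z = ⋃ {x : (x,a) ∈ G} is an open M-stationary subset of δ with z \ X
bounded in δ for every X ∈ 𝒴. -/
theorem generic_filter_gives_z (MSets 𝒴 : Set (Set Ordinal)) (δ : Ordinal)
    (G : Set (Cond MSets 𝒴 δ))
    (hup : ∀ p ∈ G, ∀ q : Cond MSets 𝒴 δ, Cond.le p q → q ∈ G)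
    (hdir : ∀ p ∈ G, ∀ q ∈ G, ∃ r ∈ G, Cond.le r p ∧ Cond.le r q)
    (hEC : ∀ C ∈ MSets, IsClubOmega1 C → ∃ p ∈ G, (p.x ∩ C).Nonempty)
    (hDX : ∀ X ∈ 𝒴, ∃ p ∈ G, X ∈ p.a) :
    IsOpenSub (⋃ p ∈ G, p.x) ∧ (∀ ξ ∈ ⋃ p ∈ G, p.x, ξ < δ) ∧
      MStat MSets (⋃ p ∈ G, p.x) ∧
      ∀ X ∈ 𝒴, ∃ β < δ, ∀ ξ ∈ ⋃ p ∈ G, p.x, ξ ∉ X → ξ < β := by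
  refine ⟨?_, ?_, ?_, ?_⟩
  · intro ξ hξ
    simp only [mem_iUnion] at hξ
    obtain ⟨p, hp, hξp⟩ := hξ
    rcases p.x_open ξ hξp with h0 | ⟨β, hβ, hsub⟩
    · exact Or.inl h0
    · refine Or.inr ⟨β, hβ, fun η hη => ?_⟩
      simp only [mem_iUnion]
      exact ⟨p, hp, hsub hη⟩
  · intro ξ hξ
    simp only [mem_iUnion] at hξ
    obtain ⟨p, _, hξp⟩ := hξ
    exact p.x_sub ξ hξp
  · intro C hC hclub
    obtain ⟨p, hp, ξ, hξp, hξC⟩ := hEC C hC hclub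
    exact ⟨ξ, mem_biUnion hp hξp, hξC⟩
  · intro X hX
    obtain ⟨p, hp, hXa⟩ := hDX X hX
    obtain ⟨β, hβ, hbd⟩ := p.x_bdd
    refine ⟨β, hβ, fun ξ hξ hξX => ?_⟩
    simp only [mem_iUnion] at hξ
    obtain ⟨q, hq, hξq⟩ := hξ
    obtain ⟨r, _, hrp, hrq⟩ := hdir p hp q hq
    have hξr : ξ ∈ r.x := hrq.1 hξq
    by_cases hξpx : ξ ∈ p.x
    · exact hbd ξ hξpx
    · exact absurd (hrp.2.2.2 ⟨hξr, hξpx⟩ X hXa) hξX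
end
end
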